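/- Let N be a topological abelian group and (U_i)_{i∈ℕ} a decreasing sequence of open subgroups of N which forms a neighbourhood basis of 0 and such that the canonical map N → lim_i N/U_i into the inverse limit is bijective (i.e., N is prodiscrete). Then the canonical map C(X,N) → lim_i C(X, N/U_i), sending a continuous function f to the compatible system of its reductions modulo U_i, is an isomorphism of abelian groups, where each quotient N/U_i carries the discrete topology and the inverse limit is taken along the natural projection maps. -/

import Mathlib

/-- The transition homomorphism `N/U_j → N/U_i` for `i ≤ j` (when `U_j ≤ U_i`). -/
def transQ (N : Type*) [AddCommGroup N] (U : ℕ → AddSubgroup N)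
    (hdec : ∀ i j : ℕ, i ≤ j → U j ≤ U i) (i j : ℕ) (hij : i ≤ j) :
    N ⧸ U j →+ N ⧸ U i :=
  QuotientAddGroup.map (U j) (U i) (AddMonoidHom.id N) (fun x hx => hdec i j hij hx)

/-- The inverse limit `lim_i N/U_i`, realized as the subgroup of compatible systems in
`Π i, N/U_i`. -/
def invLimQuot (N : Type*) [AddCommGroup N] (U : ℕ → AddSubgroup N)
    (hdec : ∀ i j : ℕ, i ≤ j → U j ≤ U i) :
    AddSubgroup ((i : ℕ) → N ⧸ U i) where
  carrier := {t | ∀ (i j : ℕ) (hij : i ≤ j), transQ N U hdec i j hij (t j) = t i}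
  add_mem' := by
    intro a b ha hb i j hij
    show transQ N U hdec i j hij (a j + b j) = a i + b i
    rw [map_add, ha i j hij, hb i j hij]
  zero_mem' := by
    intro i j hij
    show transQ N U hdec i j hij 0 = 0
    rw [map_zero]
  neg_mem' := by
    intro a ha i j hij
    show transQ N U hdec i j hij (-(a j)) = -(a i)
    rw [map_neg, ha i j hij]

/-- The canonical homomorphism `N → lim_i N/U_i`. -/
def canonToLim (N : Type*) [AddCommGroup N] (U : ℕ → AddSubgroup N)
    (hdec : ∀ i j : ℕ, i ≤ j → U j ≤ U i) :
    N →+ ↥(invLimQuot N U hdec) where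
  toFun := fun a => ⟨fun i => QuotientAddGroup.mk a, fun i j hij => rfl⟩
  map_zero' := rfl
  map_add' := fun a b => by
    apply Subtype.ext
    funext i
    show (QuotientAddGroup.mk (a + b) : N ⧸ U i) = QuotientAddGroup.mk a + QuotientAddGroup.mk b
    rfl

/-- The inverse limit `lim_i C(X, N/U_i)` of compatible systems of continuous maps. -/
def invLimMaps (X : Type*) [TopologicalSpace X]
    (N : Type*) [AddCommGroup N] [TopologicalSpace N] [IsTopologicalAddGroup N]
    (U : ℕ → AddSubgroup N) (hdec : ∀ i j : ℕ, i ≤ j → U j ≤ U i) :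
    AddSubgroup ((i : ℕ) → C(X, N ⧸ U i)) where
  carrier := {t | ∀ (i j : ℕ) (hij : i ≤ j) (x : X),
    transQ N U hdec i j hij (t j x) = t i x}
  add_mem' := by
    intro a b ha hb i j hij x
    show transQ N U hdec i j hij (a j x + b j x) = a i x + b i x
    rw [map_add, ha i j hij x, hb i j hij x]
  zero_mem' := by
    intro i j hij x
    show transQ N U hdec i j hij 0 = 0
    rw [map_zero]
  neg_mem' := by
    intro a ha i j hij x
    show transQ N U hdec i j hij (-(a j x)) = -(a i x)
    rw [map_neg, ha i j hij x]

/-- The canonical homomorphism `C(X,N) → lim_i C(X, N/U_i)` sending a continuous function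
to the compatible system of its reductions modulo the `U_i`. -/
def canonMapsToLim (X : Type*) [TopologicalSpace X]
    (N : Type*) [AddCommGroup N] [TopologicalSpace N] [IsTopologicalAddGroup N]
    (U : ℕ → AddSubgroup N) (hdec : ∀ i j : ℕ, i ≤ j → U j ≤ U i) :
    C(X, N) →+ ↥(invLimMaps X N U hdec) where
  toFun := fun f =>
    ⟨fun i => ContinuousMap.comp ⟨QuotientAddGroup.mk, continuous_quotient_mk'⟩ f,
      fun i j hij x => rfl⟩
  map_zero' := by
    apply Subtype.ext
    funext i
    apply ContinuousMap.ext
    intro x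
    rfl
  map_add' := fun f g => by
    apply Subtype.ext
    funext i
    apply ContinuousMap.ext
    intro x
    show (QuotientAddGroup.mk (f x + g x) : N ⧸ U i)
      = QuotientAddGroup.mk (f x) + QuotientAddGroup.mk (g x)
    rfl


/-- Singletons in the quotient by an open subgroup are open. -/
theorem singleton_open_aux (N : Type*) [AddCommGroup N] [TopologicalSpace N]
    [IsTopologicalAddGroup N] (U : AddSubgroup N) (h : IsOpen (U : Set N)) (a : N ⧸ U) :
    IsOpen {b : N ⧸ U | b = a} := by
  obtain ⟨a, rfl⟩ := QuotientAddGroup.mk_surjective a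
  rw [← (QuotientAddGroup.isQuotientMap_mk U).isOpen_preimage]
  have : ((QuotientAddGroup.mk : N → N ⧸ U) ⁻¹' {b : N ⧸ U | b = QuotientAddGroup.mk a}) =
      {x : N | -a + x ∈ U} := by
    ext x
    constructor
    · intro hx
      exact QuotientAddGroup.eq.mp (Eq.symm hx)
    · intro hx
      exact Eq.symm (QuotientAddGroup.eq.mpr hx)
  rw [this]
  exact h.preimage (continuous_const.add continuous_id)

/-- Let `N` be a prodiscrete abelian topological group: the `U i` form a
decreasing sequence of open subgroups which is a neighbourhood basis of `0`, and the
canonical map `N → lim_i N/U_i` is bijective. Then for `X` a compact Hausdorff totally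
disconnected space, the canonical map `C(X,N) → lim_i C(X, N/U_i)` is an isomorphism of
abelian groups. -/
theorem canonMapsToLim_bijective
    (X : Type*) [TopologicalSpace X] [CompactSpace X] [T2Space X]
    [TotallyDisconnectedSpace X]
    (N : Type*) [AddCommGroup N] [TopologicalSpace N] [IsTopologicalAddGroup N]
    (U : ℕ → AddSubgroup N)
    (hdec : ∀ i j : ℕ, i ≤ j → U j ≤ U i)
    (hopen : ∀ i, IsOpen (U i : Set N))
    (hbasis : ∀ s ∈ nhds (0 : N), ∃ i, (U i : Set N) ⊆ s)
    (hcomplete : Function.Bijective (canonToLim N U hdec)) :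
    Function.Bijective (canonMapsToLim X N U hdec) := by
  constructor
  · rw [injective_iff_map_eq_zero]
    intro f hf
    ext x
    show f x = 0
    apply hcomplete.1
    apply Subtype.ext
    funext i
    show (QuotientAddGroup.mk (f x) : N ⧸ U i) = _
    have := congrFun (congrArg ContinuousMap.toFun
      (congrFun (congrArg Subtype.val hf) i)) x
    exact this
  · intro t
    have key : ∀ x : X, ∃ a : N, ∀ i, (QuotientAddGroup.mk a : N ⧸ U i) = t.1 i x := by
      intro x
      obtain ⟨a, ha⟩ := hcomplete.2 ⟨fun i => t.1 i x, fun i j hij => t.2 i j hij x⟩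
      exact ⟨a, fun i => congrFun (congrArg Subtype.val ha) i⟩
    choose f hfspec using key
    have hcont : Continuous f := by
      rw [continuous_iff_continuousAt]
      intro x₀
      rw [ContinuousAt, Filter.tendsto_def]
      intro V hV
      have hW : (fun y => f x₀ + y) ⁻¹' V ∈ nhds (0 : N) := by
        have hc : Continuous fun y : N => f x₀ + y := continuous_const.add continuous_id
        apply hc.continuousAt (x := (0 : N))
        simpa using hV
      obtain ⟨i, hi⟩ := hbasis _ hW
      have hO : IsOpen {x : X | t.1 i x = t.1 i x₀} :=
        (singleton_open_aux N (U i) (hopen i) (t.1 i x₀)).preimage (t.1 i).continuous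
      apply Filter.mem_of_superset (hO.mem_nhds (by simp))
      intro x hx
      have hq : (QuotientAddGroup.mk (f x₀) : N ⧸ U i) = QuotientAddGroup.mk (f x) := by
        rw [hfspec x₀ i, hfspec x i]
        exact hx.symm
      have hm : -f x₀ + f x ∈ U i := QuotientAddGroup.eq.mp hq
      have := hi hm
      simpa using this
    refine ⟨⟨f, hcont⟩, ?_⟩
    apply Subtype.ext
    funext i
    apply ContinuousMap.ext
    intro x
    exact hfspec x i
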